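/- In the no-limit clairvoyance game with n = 2, in the perturbed game G_ε where player 1 must satisfy φ(W,1) + φ(L,1) ≥ ε, the profile in which player 1 bets 2 with probability 1 - 2ε/3 and 1 with probability 2ε/3 with a winning hand, bets 2 with probability 2(3-2ε)/9, bets 1 with probability ε/3, and checks with probability (3+ε)/9 with a losing hand, and player 2 calls a bet of 2 with probability 1/3 and a bet of 1 with probability 5/9, is a Nash equilibrium of G_ε, with player 1's expected payoff equal to 1/3 - ε/18. -/
import Mathlib


/-!  A concrete model of the no-limit clairvoyance game with integer bet sizes.
Player 1 is dealt a winning hand (`true`) or losing hand (`false`) with probability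
1/2 each, bets an integer `x ∈ {0,…,n}` (0 = check), and player 2 calls or folds.
A strategy for player 1 assigns to each hand a probability distribution over bet
sizes; a strategy for player 2 assigns to each bet size a calling probability. -/

/-- `s` is a valid strategy for player 1 in the clairvoyance game with stack `n`. -/
def IsStrat1 (n : ℕ) (s : Bool → ℕ → ℝ) : Prop :=
  (∀ h x, 0 ≤ s h x) ∧ (∀ h : Bool, ∑ x ∈ Finset.range (n + 1), s h x = 1)

/-- `s` is a valid strategy for player 2 (a calling probability for each bet size). -/
def IsStrat2 (n : ℕ) (s : ℕ → ℝ) : Prop :=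
  ∀ x, 0 ≤ s x ∧ s x ≤ 1

/-- Player 1's payoff with hand `h` after betting `x`, when player 2 calls a bet of
size `x` with probability `s2 x`: a check yields ±0.5, a called bet of `x` yields
±(0.5 + x), and a fold yields +0.5. -/
noncomputable def pay (s2 : ℕ → ℝ) (h : Bool) (x : ℕ) : ℝ :=
  if x = 0 then (if h then 0.5 else -0.5)
  else s2 x * (if h then (0.5 + (x : ℝ)) else -(0.5 + (x : ℝ))) + (1 - s2 x) * 0.5

/-- Player 1's expected payoff (hands equiprobable); the game is zero-sum. -/
noncomputable def u1 (n : ℕ) (s1 : Bool → ℕ → ℝ) (s2 : ℕ → ℝ) : ℝ :=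
  (1/2) * ∑ x ∈ Finset.range (n + 1), s1 true x * pay s2 true x
    + (1/2) * ∑ x ∈ Finset.range (n + 1), s1 false x * pay s2 false x

/-- `(s1, s2)` is a Nash equilibrium of the (zero-sum) clairvoyance game:
no unilateral profitable deviation. -/
def IsNash (n : ℕ) (s1 : Bool → ℕ → ℝ) (s2 : ℕ → ℝ) : Prop :=
  IsStrat1 n s1 ∧ IsStrat2 n s2 ∧
  (∀ s1', IsStrat1 n s1' → u1 n s1' s2 ≤ u1 n s1 s2) ∧
  (∀ s2', IsStrat2 n s2' → u1 n s1 s2 ≤ u1 n s1 s2')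

/-- Nash equilibrium of the perturbed game `G_ε` (with `n = 2`) in which player 1 must
bet 1 with total probability (over the winning and losing hand) at least `ε`. -/
def IsNashPert (ε : ℝ) (s1 : Bool → ℕ → ℝ) (s2 : ℕ → ℝ) : Prop :=
  IsStrat1 2 s1 ∧ ε ≤ s1 true 1 + s1 false 1 ∧ IsStrat2 2 s2 ∧
  (∀ s1', IsStrat1 2 s1' → ε ≤ s1' true 1 + s1' false 1 →
    u1 2 s1' s2 ≤ u1 2 s1 s2) ∧
  (∀ s2', IsStrat2 2 s2' → u1 2 s1 s2 ≤ u1 2 s1 s2')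

/-- In the perturbed clairvoyance game `G_ε` (with `n = 2`, and player 1 required to
bet 1 with total probability at least `ε`), the profile where player 1 bets 2 with
probability `1 - 2ε/3` and 1 with probability `2ε/3` with a winning hand; bets 2 with
probability `2(3-2ε)/9`, bets 1 with probability `ε/3`, and checks with probability
`(3+ε)/9` with a losing hand; and player 2 calls a bet of 2 with probability 1/3 and a
bet of 1 with probability 5/9, is a Nash equilibrium of `G_ε`, and player 1's expected
payoff equals `1/3 - ε/18`. -/
theorem perturbed_equilibrium_five_ninths (ε : ℝ) (hε : 0 < ε) (hε1 : ε ≤ 1)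
    (s1 : Bool → ℕ → ℝ)
    (hs1 : s1 = fun h x =>
      if h then (if x = 2 then 1 - 2*ε/3 else if x = 1 then 2*ε/3 else 0)
      else (if x = 2 then 2*(3 - 2*ε)/9 else if x = 1 then ε/3
            else if x = 0 then (3 + ε)/9 else 0))
    (s2 : ℕ → ℝ) (hs2 : s2 = fun x => if x = 2 then 1/3 else 5/9) :
    IsNashPert ε s1 s2 ∧ u1 2 s1 s2 = 1/3 - ε/18 := by
  subst hs1 hs2
  set S1 : Bool → ℕ → ℝ := fun h x =>
      if h then (if x = 2 then 1 - 2*ε/3 else if x = 1 then 2*ε/3 else 0)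
      else (if x = 2 then 2*(3 - 2*ε)/9 else if x = 1 then ε/3
            else if x = 0 then (3 + ε)/9 else 0) with hS1
  set S2 : ℕ → ℝ := fun x => if x = 2 then (1:ℝ)/3 else 5/9 with hS2
  have hval : u1 2 S1 S2 = 1/3 - ε/18 := by
    simp only [u1, pay, Finset.sum_range_succ, Finset.sum_range_zero, hS1, hS2]
    norm_num
    ring
  have hnn : ∀ (h : Bool) (x : ℕ), 0 ≤ S1 h x := by
    intro h x
    simp only [hS1]
    cases h <;> simp only [Bool.false_eq_true, if_true, if_false] <;>
      split_ifs <;> linarith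
  have hsum1 : ∀ h : Bool, ∑ x ∈ Finset.range (2 + 1), S1 h x = 1 := by
    intro h
    simp only [hS1]
    cases h <;>
      simp only [Finset.sum_range_succ, Finset.sum_range_zero, Bool.false_eq_true,
        if_true, if_false] <;> norm_num <;> ring_nf
  have hcon : ε ≤ S1 true 1 + S1 false 1 := by
    simp only [hS1]; norm_num; linarith
  have hstr2 : IsStrat2 2 S2 := by
    intro x
    simp only [hS2]
    split_ifs <;> norm_num
  have hdev1 : ∀ s1', IsStrat1 2 s1' → ε ≤ s1' true 1 + s1' false 1 →
      u1 2 s1' S2 ≤ u1 2 S1 S2 := by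
    intro s1' hstr hcon'
    obtain ⟨hpos, hsum⟩ := hstr
    rw [hval]
    have h0 := hsum true
    have h1 := hsum false
    simp only [Finset.sum_range_succ, Finset.sum_range_zero] at h0 h1
    simp only [u1, pay, Finset.sum_range_succ, Finset.sum_range_zero, hS2]
    norm_num
    linarith [hpos true 0, hpos true 1, hpos true 2, hpos false 0, hpos false 1,
      hpos false 2]
  have hdev2 : ∀ s2', IsStrat2 2 s2' → u1 2 S1 S2 ≤ u1 2 S1 s2' := by
    intro s2' hs2'
    rw [hval]
    simp only [u1, pay, Finset.sum_range_succ, Finset.sum_range_zero, hS1]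
    norm_num
    ring_nf
    linarith
  exact ⟨⟨⟨hnn, hsum1⟩, hcon, hstr2, hdev1, hdev2⟩, hval⟩
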